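/- If the profile P has a Condorcet cycle (G(P) contains a directed cycle), then for any voting rule f, σ_U(f,P) = g(h(W)) where W = max over pairs in D(f,P) of δ_{A,B}(P), h(x) = 1/2 − x/(2n), and g(x) = x/(1−x). In particular, σ_U(f,P) is a strictly decreasing function of the maximum weight among edges of G(P) that disagree with f(P), and this function does not depend on f. -/

import Mathlib

open scoped Classical

noncomputable section

/-- Relative ranking entry of voter `i` on the pair `(A,B)`. -/
def Xrel {V C : Type*} (P : V → C → C → Prop) (A B : C) (i : V) : ℝ :=
  if P i A B then 1 else if P i B A then 0 else 1/2

/-- The signed margin `(X_{A,B}(P) − X_{B,A}(P)) · 1` by which voters prefer `A` to `B`.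
The pairwise comparison graph `G(P)` has an edge from `A` to `B` exactly when this is positive. -/
def margin {V C : Type*} [Fintype V] (P : V → C → C → Prop) (A B : C) : ℝ :=
  ∑ i, (Xrel P A B i - Xrel P B A i)

/-- The alignment `I_{A,B}(f,P)`. -/
def align {V C : Type*} [Fintype V] (f : (V → C → C → Prop) → C → C → Prop)
    (P : V → C → C → Prop) (A B : C) : ℝ :=
  if f P A B then (∑ i, Xrel P A B i) / (Fintype.card V)
  else (∑ i, Xrel P B A i) / (Fintype.card V)

/-- The misalignment score `M(f,P)`: the minimum alignment over pairs of candidates. -/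
def Mmin {V C : Type*} [Fintype V] (f : (V → C → C → Prop) → C → C → Prop)
    (P : V → C → C → Prop) : ℝ :=
  sInf {x : ℝ | ∃ A B : C, A ≠ B ∧ x = align f P A B}

/-- `σ_U(f,P) = M/(1−M)` if `M(f,P) < 1/2`, and `1` otherwise. -/
def sigmaU {V C : Type*} [Fintype V] (f : (V → C → C → Prop) → C → C → Prop)
    (P : V → C → C → Prop) : ℝ :=
  if Mmin f P < 1/2 then Mmin f P / (1 - Mmin f P) else 1

section Aux
variable {V C : Type*} [Fintype V] (P : V → C → C → Prop)

omit [Fintype V] in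
lemma Xrel_add (hP : ∀ i A B, ¬ (P i A B ∧ P i B A)) (A B : C) (i : V) :
    Xrel P A B i + Xrel P B A i = 1 := by
  unfold Xrel
  by_cases h1 : P i A B
  · have h2 : ¬ P i B A := fun h => hP i A B ⟨h1, h⟩
    simp [h1, h2]
  · by_cases h2 : P i B A <;> simp [h1, h2] <;> norm_num

lemma sum_Xrel (hP : ∀ i A B, ¬ (P i A B ∧ P i B A)) (A B : C) :
    ∑ i, Xrel P A B i = ((Fintype.card V : ℝ) + margin P A B) / 2 := by
  have h1 : ∑ i, (Xrel P A B i + Xrel P B A i) = (Fintype.card V : ℝ) := by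
    simp [Xrel_add P hP]
  rw [Finset.sum_add_distrib] at h1
  unfold margin
  rw [Finset.sum_sub_distrib]
  linarith

lemma margin_self (A : C) : margin P A A = 0 := by simp [margin]

lemma margin_neg (A B : C) : margin P B A = - margin P A B := by
  unfold margin
  rw [← Finset.sum_neg_distrib]
  exact Finset.sum_congr rfl fun i _ => by ring

lemma margin_le (A B : C) : margin P A B ≤ (Fintype.card V : ℝ) := by
  unfold margin
  calc ∑ i, (Xrel P A B i - Xrel P B A i) ≤ ∑ _i : V, (1:ℝ) := by
        apply Finset.sum_le_sum
        intro i _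
        unfold Xrel
        split_ifs <;> norm_num
    _ = (Fintype.card V : ℝ) := by simp

lemma chain_transGen {α : Type*} {r : α → α → Prop} :
    ∀ {l : List α} {a b : α}, List.Chain r a (l ++ [b]) → Relation.TransGen r a b
  | [], a, b, h => by
      simp only [List.nil_append, List.chain_cons, List.Chain.nil, and_true] at h
      exact Relation.TransGen.single (List.rel_of_isChain_cons_cons h)
  | c :: l, a, b, h => by
      rw [List.cons_append, List.Chain, List.chain_cons] at h
      exact Relation.TransGen.head h.1 (chain_transGen h.2)

end Aux


lemma gh_anti {n : ℝ} (hn : 0 < n) :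
    StrictAntiOn (fun x : ℝ => (1/2 - x / (2 * n)) / (1 - (1/2 - x / (2 * n))))
      (Set.Icc 0 n) := by
  intro x hx y hy hxy
  simp only [Set.mem_Icc] at hx hy
  have h2n : (0:ℝ) < 2 * n := by linarith
  have hyn : y / (2*n) ≤ 1/2 := by rw [div_le_iff₀ h2n]; linarith [hy.2]
  have hx0 : 0 ≤ x / (2*n) := div_nonneg hx.1 h2n.le
  have hxy' : x / (2*n) < y / (2*n) := by gcongr
  simp only
  rw [div_lt_div_iff₀ (by linarith) (by linarith)]
  nlinarith [hxy']

/-- If `P` has a Condorcet cycle, then for any voting rule `f`,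
`σ_U(f,P) = g(h(W))` where `W` is the maximum weight among edges of `G(P)` disagreeing with
`f(P)`, `h(x) = 1/2 − x/(2n)` and `g(x) = x/(1−x)`; moreover `g ∘ h` is strictly decreasing
on `[0,n]`, and it does not depend on `f`. -/
theorem stmt13 {V C : Type*} [Fintype V] [Fintype C]
    (hn : 0 < Fintype.card V) (hC : 2 ≤ Fintype.card C)
    (P : V → C → C → Prop) (hP : ∀ i A B, ¬ (P i A B ∧ P i B A))
    (hcyc : ∃ (A : C) (l : List C),
      List.Chain (fun a b => 0 < margin P a b) A (l ++ [A]))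
    (f : (V → C → C → Prop) → C → C → Prop)
    (hf : IsStrictTotalOrder C (f P)) :
    sigmaU f P =
      (1/2 - (sSup {x : ℝ | ∃ A B : C, 0 < margin P A B ∧ f P B A ∧ x = margin P A B}) /
          (2 * Fintype.card V)) /
        (1 - (1/2 - (sSup {x : ℝ | ∃ A B : C, 0 < margin P A B ∧ f P B A ∧ x = margin P A B}) /
          (2 * Fintype.card V))) ∧
    StrictAntiOn
      (fun x : ℝ => (1/2 - x / (2 * Fintype.card V)) / (1 - (1/2 - x / (2 * Fintype.card V))))
      (Set.Icc 0 (Fintype.card V : ℝ)) := by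
  haveI := hf
  have hn' : (0:ℝ) < (Fintype.card V : ℝ) := by exact_mod_cast hn
  set n : ℝ := (Fintype.card V : ℝ) with hn_def
  have h2n : (0:ℝ) < 2 * n := by linarith
  constructor
  · -- main equality
    set D : Set ℝ := {x : ℝ | ∃ A B : C, 0 < margin P A B ∧ f P B A ∧ x = margin P A B} with hD
    have hDfin : D.Finite := by
      apply Set.Finite.subset (Set.finite_range (fun p : C × C => margin P p.1 p.2))
      rintro x ⟨A, B, -, -, rfl⟩
      exact ⟨(A, B), rfl⟩
    have hDne : D.Nonempty := by
      obtain ⟨A0, l, hchain⟩ := hcyc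
      by_contra h
      rw [Set.not_nonempty_iff_eq_empty] at h
      have hno : ∀ a b : C, 0 < margin P a b → ¬ f P b a := by
        intro a b hm hb
        have : margin P a b ∈ D := ⟨a, b, hm, hb, rfl⟩
        rw [h] at this
        exact this
      have hstep : ∀ a b : C, 0 < margin P a b → f P a b := by
        intro a b hm
        have hne : a ≠ b := by
          rintro rfl
          rw [margin_self] at hm
          exact lt_irrefl 0 hm
        rcases trichotomous_of (f P) a b with h1 | h1 | h1
        · exact h1
        · exact absurd h1 hne
        · exact absurd h1 (hno a b hm)
      have hchain' : List.Chain (f P) A0 (l ++ [A0]) :=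
        List.Chain.imp (fun a b hab => hstep a b hab) hchain
      have htg : Relation.TransGen (f P) A0 A0 := chain_transGen hchain'
      have htrans : Transitive (f P) := fun _ _ _ => trans_of (f P)
      rw [Relation.transGen_eq_self] at htg
      exact irrefl_of (f P) A0 htg
    set W : ℝ := sSup D with hW
    obtain ⟨A1, B1, hm1, hf1, hWeq⟩ := hDne.csSup_mem hDfin
    have hWpos : 0 < W := by rw [hW, hWeq]; exact hm1
    have hW_ub : ∀ x ∈ D, x ≤ W := fun x hx => le_csSup hDfin.bddAbove hx
    -- alignment formula
    have halign : ∀ A B : C, f P B A → align f P A B = 1/2 - margin P A B / (2 * n) := by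
      intro A B hBA
      have hnAB : ¬ f P A B := asymm_of (f P) hBA
      unfold align
      rw [if_neg hnAB, sum_Xrel P hP B A, margin_neg]
      field_simp
      ring
    have align_symm : ∀ A B : C, f P A B → align f P A B = align f P B A := by
      intro A B h
      have h' : ¬ f P B A := asymm_of (f P) h
      unfold align
      rw [if_pos h, if_neg h']
    -- lower bound on align of distinct pairs
    have hmain : ∀ X Y : C, f P Y X → 1/2 - W / (2*n) ≤ align f P X Y := by
      intro X Y hXY
      rw [halign X Y hXY]
      by_cases hm : 0 < margin P X Y
      · have hle : margin P X Y ≤ W := hW_ub _ ⟨X, Y, hm, hXY, rfl⟩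
        have hdiv : margin P X Y / (2*n) ≤ W / (2*n) := by gcongr
        linarith
      · push_neg at hm
        have h1 : margin P X Y / (2*n) ≤ 0 :=
          div_nonpos_of_nonpos_of_nonneg hm h2n.le
        have h2 : 0 < W / (2*n) := div_pos hWpos h2n
        linarith
    have hlow : ∀ A B : C, A ≠ B → 1/2 - W / (2*n) ≤ align f P A B := by
      intro A B hAB
      rcases trichotomous_of (f P) A B with h | h | h
      · rw [align_symm A B h]
        exact hmain B A h
      · exact absurd h hAB
      · exact hmain A B h
    -- compute Mmin
    set E : Set ℝ := {x : ℝ | ∃ A B : C, A ≠ B ∧ x = align f P A B} with hE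
    have hEfin : E.Finite := by
      apply Set.Finite.subset (Set.finite_range (fun p : C × C => align f P p.1 p.2))
      rintro x ⟨A, B, -, rfl⟩
      exact ⟨(A, B), rfl⟩
    have hA1B1 : A1 ≠ B1 := by
      rintro rfl
      rw [margin_self] at hm1
      exact lt_irrefl 0 hm1
    have hmemE : (1/2 - W / (2*n)) ∈ E := by
      refine ⟨A1, B1, hA1B1, ?_⟩
      rw [halign A1 B1 hf1, hW, hWeq]
    have hMeq : Mmin f P = 1/2 - W / (2*n) := by
      have hME : Mmin f P = sInf E := rfl
      rw [hME]
      apply le_antisymm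
      · exact csInf_le hEfin.bddBelow hmemE
      · apply le_csInf ⟨_, hmemE⟩
        rintro x ⟨A, B, hAB, rfl⟩
        exact hlow A B hAB
    have hMlt : Mmin f P < 1/2 := by
      rw [hMeq]
      have : 0 < W / (2*n) := div_pos hWpos h2n
      linarith
    rw [sigmaU, if_pos hMlt, hMeq]
  · exact gh_anti hn'
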